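/- For n ≥ 4, the Apollonian group A_n = ⟨S_1, ..., S_{n+2}⟩ is a free product of n+2 copies of ℤ/2ℤ: no nonempty product S_{j_1}S_{j_2}···S_{j_k} with consecutive indices distinct equals the identity matrix. -/

import Mathlib

open Matrix

/-- Descartes quadratic form matrix in dimension `n`. -/
noncomputable def QD (n : ℕ) : Matrix (Fin (n+2)) (Fin (n+2)) ℝ :=
  1 - (n : ℝ)⁻¹ • Matrix.of (fun _ _ => (1 : ℝ))

/-- Wilker quadratic form matrix in dimension `n`. -/
def QW (n : ℕ) : Matrix (Fin (n+2)) (Fin (n+2)) ℝ :=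
  Matrix.of (fun i j =>
    if (i = 0 ∧ j = 1) ∨ (i = 1 ∧ j = 0) then (-4 : ℝ)
    else if i = j then (if 2 ≤ (i : ℕ) then 2 else 0) else 0)

/-- Apollonian group generator `S j` in dimension `n`. -/
noncomputable def S (n : ℕ) (j : Fin (n+2)) : Matrix (Fin (n+2)) (Fin (n+2)) ℝ :=
  Matrix.of (fun i k =>
    if i = j then (if k = j then -1 else 2 / ((n : ℝ) - 1))
    else if i = k then 1 else 0)

/-- Dual Apollonian group generator `S j ^⊥` in dimension `n`. -/
def Sperp (n : ℕ) (j : Fin (n+2)) : Matrix (Fin (n+2)) (Fin (n+2)) ℝ :=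
  Matrix.of (fun i k =>
    if k = j then (if i = j then -1 else 2)
    else if i = k then 1 else 0)

/-! ### Auxiliary development: rational / p-adic models of the generators -/

/-- Rational model of `S`. -/
def Sq (n : ℕ) (j : Fin (n+2)) : Matrix (Fin (n+2)) (Fin (n+2)) ℚ :=
  Matrix.of (fun i k =>
    if i = j then (if k = j then -1 else 2 / ((n : ℚ) - 1))
    else if i = k then 1 else 0)

/-- p-adic model of `S`. -/
noncomputable def Tq (n p : ℕ) [Fact p.Prime] (j : Fin (n+2)) :
    Matrix (Fin (n+2)) (Fin (n+2)) ℚ_[p] :=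
  Matrix.of (fun i k =>
    if i = j then (if k = j then -1 else 2 / ((n : ℚ_[p]) - 1))
    else if i = k then 1 else 0)

lemma Sq_map_real (n : ℕ) (j : Fin (n+2)) :
    (Sq n j).map ((↑) : ℚ → ℝ) = S n j := by
  ext i k
  simp only [Sq, S, Matrix.map_apply, Matrix.of_apply]
  split_ifs <;> push_cast <;> ring

lemma Sq_map_padic (n p : ℕ) [Fact p.Prime] (j : Fin (n+2)) :
    (Sq n j).map ((↑) : ℚ → ℚ_[p]) = Tq n p j := by
  ext i k
  simp only [Sq, Tq, Matrix.map_apply, Matrix.of_apply]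
  split_ifs <;> push_cast <;> ring

lemma exists_good_prime {d : ℕ} (hd : 3 ≤ d) :
    ∃ p : ℕ, p.Prime ∧ ((p ≠ 2 ∧ p ∣ d) ∨ (p = 2 ∧ 4 ∣ d)) := by
  have hd0 : d ≠ 0 := by omega
  by_cases hq : d / 2 ^ d.factorization 2 = 1
  · refine ⟨2, Nat.prime_two, Or.inr ⟨rfl, ?_⟩⟩
    have h := Nat.ordProj_mul_ordCompl_eq_self d 2
    rw [hq, mul_one] at h
    have hk : 2 ≤ d.factorization 2 := by
      by_contra hk
      have h2 : 2 ^ d.factorization 2 ≤ 2 ^ 1 :=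
        Nat.pow_le_pow_right (by norm_num) (by omega)
      omega
    calc (4 : ℕ) = 2 ^ 2 := rfl
      _ ∣ 2 ^ d.factorization 2 := pow_dvd_pow 2 hk
      _ = d := h
  · refine ⟨(d / 2 ^ d.factorization 2).minFac, Nat.minFac_prime hq, Or.inl ⟨?_, ?_⟩⟩
    · intro h2
      have hdvd := Nat.minFac_dvd (d / 2 ^ d.factorization 2)
      rw [h2] at hdvd
      exact Nat.not_dvd_ordCompl Nat.prime_two hd0 hdvd
    · exact (Nat.minFac_dvd _).trans (Nat.ordCompl_dvd d 2)

lemma norm_c_gt_one {n p : ℕ} [hp : Fact p.Prime] (hn : 4 ≤ n)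
    (h : (p ≠ 2 ∧ p ∣ (n - 1)) ∨ (p = 2 ∧ 4 ∣ (n - 1))) :
    1 < ‖(2 / ((n : ℚ_[p]) - 1) : ℚ_[p])‖ := by
  have hcast : ((n : ℚ_[p]) - 1) = (((n - 1 : ℕ) : ℤ) : ℚ_[p]) := by
    have h1 : (1 : ℕ) ≤ n := by omega
    push_cast [Nat.cast_sub h1]
    ring
  have hdnorm : (0 : ℝ) < ‖(((n - 1 : ℕ) : ℤ) : ℚ_[p])‖ := by
    rw [norm_pos_iff]
    have hne : ((n - 1 : ℕ) : ℤ) ≠ 0 := Int.natCast_ne_zero.mpr (by omega)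
    exact Int.cast_ne_zero.mpr hne
  have key : ‖(((n - 1 : ℕ) : ℤ) : ℚ_[p])‖ < ‖(2 : ℚ_[p])‖ := by
    rcases h with ⟨hp2, hpd⟩ | ⟨hp2, h4d⟩
    · have h2 : ‖(2 : ℚ_[p])‖ = 1 := by
        refine le_antisymm (by exact_mod_cast Padic.norm_int_le_one (p := p) 2) ?_
        by_contra hlt
        push_neg at hlt
        have hdvd : (p : ℤ) ∣ 2 :=
          (Padic.norm_intCast_lt_one_iff (p := p) (k := 2)).mp (by exact_mod_cast hlt)
        have hpd2 : p ∣ 2 := by exact_mod_cast hdvd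
        exact hp2 ((Nat.prime_dvd_prime_iff_eq hp.out Nat.prime_two).mp hpd2)
      rw [h2]
      refine (Padic.norm_intCast_lt_one_iff).mpr ?_
      exact_mod_cast Int.natCast_dvd_natCast.mpr hpd
    · subst hp2
      have hle : ‖(((n - 1 : ℕ) : ℤ) : ℚ_[2])‖ ≤ (2 : ℝ) ^ (-(2 : ℕ) : ℤ) := by
        refine (Padic.norm_int_le_pow_iff_dvd (p := 2) _ 2).mpr ?_
        exact_mod_cast Int.natCast_dvd_natCast.mpr h4d
      have h2 : ‖(2 : ℚ_[2])‖ = (2 : ℝ)⁻¹ := by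
        have := Padic.norm_p (p := 2)
        exact_mod_cast this
      rw [h2]
      refine lt_of_le_of_lt hle ?_
      norm_num
  rw [norm_div, hcast]
  rw [one_lt_div hdnorm]
  exact key

lemma key_norm (n p : ℕ) [Fact p.Prime] {r : ℝ}
    (hr : r = ‖(2 / ((n : ℚ_[p]) - 1) : ℚ_[p])‖) (hr1 : 1 < r) :
    ∀ ℓ : ℕ, ∀ j : ℕ → Fin (n+2), (∀ i : ℕ, i + 1 < ℓ + 1 → j i ≠ j (i + 1)) →
    (∀ a b, ‖(((List.range (ℓ+1)).map fun i => Tq n p (j i)).prod) a b‖ ≤ r ^ (ℓ+1)) ∧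
    (∀ a, a ≠ j 0 → ∀ b,
      ‖(((List.range (ℓ+1)).map fun i => Tq n p (j i)).prod) a b‖ ≤ r ^ ℓ) ∧
    (∃ b, ‖(((List.range (ℓ+1)).map fun i => Tq n p (j i)).prod) (j 0) b‖ = r ^ (ℓ+1)) := by
  have hr0 : (0 : ℝ) < r := lt_trans one_pos hr1
  have hrle : (1 : ℝ) ≤ r := le_of_lt hr1
  intro ℓ
  induction ℓ with
  | zero =>
    intro j _
    have hprod : ((List.range 1).map fun i => Tq n p (j i)).prod = Tq n p (j 0) := by
      show ([Tq n p (j 0)]).prod = Tq n p (j 0)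
      rw [List.prod_singleton]
    rw [hprod]
    refine ⟨?_, ?_, ?_⟩
    · intro a b
      simp only [Tq, Matrix.of_apply]
      rw [pow_one]
      split_ifs <;> simp [← hr] <;> linarith
    · intro a ha b
      simp only [Tq, Matrix.of_apply, if_neg ha, pow_zero]
      split_ifs <;> simp
    · obtain ⟨b, hb⟩ := exists_ne (j 0)
      refine ⟨b, ?_⟩
      have hentry : Tq n p (j 0) (j 0) b = 2 / ((n : ℚ_[p]) - 1) := by
        simp [Tq, hb]
      rw [hentry, pow_one, hr]
  | succ ℓ ih =>
    intro j hred
    have hred' : ∀ i : ℕ, i + 1 < ℓ + 1 → j (i+1) ≠ j (i+1+1) :=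
      fun i hi => hred (i+1) (by omega)
    obtain ⟨H1, H2, H3⟩ := ih (fun i => j (i+1)) hred'
    set P' := ((List.range (ℓ+1)).map fun i => Tq n p (j (i+1))).prod with hP'
    have hsplit : ((List.range (ℓ+1+1)).map fun i => Tq n p (j i)).prod
        = Tq n p (j 0) * P' := by
      rw [List.range_succ_eq_map]
      simp only [List.map_cons, List.map_map, List.prod_cons, hP']
      rfl
    have hj01 : j 0 ≠ j 1 := hred 0 (by omega)
    set c : ℚ_[p] := 2 / ((n : ℚ_[p]) - 1) with hc
    have hcr : ‖c‖ = r := hr.symm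
    have hrow : ∀ a, a ≠ j 0 → ∀ b, (Tq n p (j 0) * P') a b = P' a b := by
      intro a ha b
      rw [Matrix.mul_apply]
      rw [Finset.sum_eq_single a]
      · simp [Tq, ha]
      · intro m _ hm
        simp [Tq, ha, Ne.symm hm]
      · intro hmem
        exact absurd (Finset.mem_univ a) hmem
    have htop : ∀ b, (Tq n p (j 0) * P') (j 0) b
        = ∑ m : Fin (n+2), (if m = j 0 then (-1 : ℚ_[p]) else c) * P' m b := by
      intro b
      rw [Matrix.mul_apply]
      refine Finset.sum_congr rfl fun m _ => ?_
      simp [Tq, hc]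
    refine ⟨?_, ?_, ?_⟩
    · intro a b
      rw [hsplit]
      by_cases ha : a = j 0
      · subst ha
        rw [htop b]
        refine IsUltrametricDist.norm_sum_le_of_forall_le_of_nonneg
          (pow_nonneg (le_of_lt hr0) _) fun m _ => ?_
        by_cases hm : m = j 0
        · rw [if_pos hm, neg_one_mul, norm_neg]
          exact (H1 m b).trans (pow_le_pow_right₀ hrle (by omega))
        · rw [if_neg hm, norm_mul, hcr]
          calc r * ‖P' m b‖ ≤ r * r ^ (ℓ+1) :=
                mul_le_mul_of_nonneg_left (H1 m b) (le_of_lt hr0)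
            _ = r ^ (ℓ+1+1) := by rw [pow_succ]; ring
      · rw [hrow a ha]
        exact (H1 a b).trans (pow_le_pow_right₀ hrle (by omega))
    · intro a ha b
      rw [hsplit, hrow a ha]
      exact H1 a b
    · obtain ⟨b, hb⟩ := H3
      refine ⟨b, ?_⟩
      rw [hsplit, htop b]
      rw [← Finset.add_sum_erase Finset.univ
        (fun m => (if m = j 0 then (-1 : ℚ_[p]) else c) * P' m b)
        (Finset.mem_univ (j 1))]
      have hmain : ‖(if j 1 = j 0 then (-1 : ℚ_[p]) else c) * P' (j 1) b‖ = r ^ (ℓ+1+1) := by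
        rw [if_neg (Ne.symm hj01), norm_mul, hcr, hb, pow_succ]
        ring
      have hrest : ‖∑ m ∈ Finset.univ.erase (j 1),
          (if m = j 0 then (-1 : ℚ_[p]) else c) * P' m b‖ ≤ r ^ (ℓ+1) := by
        refine IsUltrametricDist.norm_sum_le_of_forall_le_of_nonneg
          (pow_nonneg (le_of_lt hr0) _) fun m hm => ?_
        have hm1 : m ≠ j 1 := (Finset.mem_erase.mp hm).1
        by_cases hm0 : m = j 0
        · rw [if_pos hm0, neg_one_mul, norm_neg, hm0]
          exact (H2 (j 0) hj01 b).trans (pow_le_pow_right₀ hrle (by omega))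
        · rw [if_neg hm0, norm_mul, hcr]
          calc r * ‖P' m b‖ ≤ r * r ^ ℓ :=
                mul_le_mul_of_nonneg_left (H2 m hm1 b) (le_of_lt hr0)
            _ = r ^ (ℓ+1) := by rw [pow_succ]; ring
      have hlt : ‖∑ m ∈ Finset.univ.erase (j 1),
          (if m = j 0 then (-1 : ℚ_[p]) else c) * P' m b‖ < r ^ (ℓ+1+1) :=
        lt_of_le_of_lt hrest (pow_lt_pow_right₀ hr1 (by omega))
      rw [Padic.add_eq_max_of_ne (by rw [hmain]; exact ne_of_gt hlt)]
      rw [hmain]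
      exact max_eq_left (le_of_lt hlt)

theorem apollonian_free_product (n : ℕ) (hn : 4 ≤ n)
    (k : ℕ) (hk : 0 < k) (j : ℕ → Fin (n+2))
    (hred : ∀ i : ℕ, i + 1 < k → j i ≠ j (i + 1)) :
    ((List.range k).map (fun i => S n (j i))).prod ≠ 1 := by
  intro hcon
  obtain ⟨p, hp, hcase⟩ := exists_good_prime (show 3 ≤ n - 1 by omega)
  haveI : Fact p.Prime := ⟨hp⟩
  set Pq := ((List.range k).map fun i => Sq n (j i)).prod with hPq
  have hmapR : (Rat.castHom ℝ).mapMatrix Pq = ((List.range k).map fun i => S n (j i)).prod := by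
    rw [hPq, map_list_prod, List.map_map]
    congr 1
    refine List.map_congr_left fun i _ => ?_
    show (Rat.castHom ℝ).mapMatrix (Sq n (j i)) = S n (j i)
    rw [RingHom.mapMatrix_apply]
    exact Sq_map_real n (j i)
  have hPq1 : Pq = 1 := by
    have h1 : (Rat.castHom ℝ).mapMatrix Pq = 1 := by rw [hmapR, hcon]
    ext a b
    have h2 := congrFun (congrFun (congrArg (fun M => (M : Matrix (Fin (n+2)) (Fin (n+2)) ℝ)) h1) a) b
    simp only [RingHom.mapMatrix_apply, Matrix.map_apply, Rat.coe_castHom] at h2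
    rw [Matrix.one_apply] at h2 ⊢
    by_cases hab : a = b
    · rw [if_pos hab] at h2 ⊢
      exact_mod_cast h2
    · rw [if_neg hab] at h2 ⊢
      exact_mod_cast h2
  have hmapP : (Rat.castHom ℚ_[p]).mapMatrix Pq
      = ((List.range k).map fun i => Tq n p (j i)).prod := by
    rw [hPq, map_list_prod, List.map_map]
    congr 1
    refine List.map_congr_left fun i _ => ?_
    show (Rat.castHom ℚ_[p]).mapMatrix (Sq n (j i)) = Tq n p (j i)
    rw [RingHom.mapMatrix_apply]
    exact Sq_map_padic n p (j i)
  have hT1 : ((List.range k).map fun i => Tq n p (j i)).prod = 1 := by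
    rw [← hmapP, hPq1, _root_.map_one]
  obtain ⟨ℓ, rfl⟩ : ∃ ℓ, k = ℓ + 1 := ⟨k - 1, by omega⟩
  have hc1 : 1 < ‖(2 / ((n : ℚ_[p]) - 1) : ℚ_[p])‖ := norm_c_gt_one hn hcase
  obtain ⟨-, -, b, hb⟩ := key_norm n p rfl hc1 ℓ j hred
  rw [hT1] at hb
  have hle1 : ‖(1 : Matrix (Fin (n+2)) (Fin (n+2)) ℚ_[p]) (j 0) b‖ ≤ 1 := by
    rw [Matrix.one_apply]
    split_ifs <;> simp
  rw [hb] at hle1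
  have hgt : 1 < ‖(2 / ((n : ℚ_[p]) - 1) : ℚ_[p])‖ ^ (ℓ + 1) :=
    one_lt_pow₀ hc1 (Nat.succ_ne_zero ℓ)
  linarith
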